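/- arXiv:1609.02698 — 2 statements merged into one kernel-verified Lean document; each statement's English description precedes it below -/
import Mathlib

section
/- Discrete Noether theorem without change of time (T = ℤ): Let L : ℤ × ℝ^d × ℝ^d → ℝ be a Lagrangian, and define Δx(n) = x(n+1) − x(n). Suppose x : ℤ → ℝ^d satisfies the discrete Euler–Lagrange equation ∂L/∂v(n,x(n),Δx(n)) − ∂L/∂v(n−1,x(n−1),Δx(n−1)) = ∂L/∂x(n,x(n),Δx(n)) for all n, and suppose the infinitesimal invariance identity ⟨∂L/∂x(n,x(n),Δx(n)), ξ(x(n))⟩ + ⟨∂L/∂v(n,x(n),Δx(n)), ξ(x(n+1)) − ξ(x(n))⟩ = 0 holds for all n. Then the quantity I(n) = ⟨ξ(x(n+1)), ∂L/∂v(n,x(n),Δx(n))⟩ is independent of n. -/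
/-- Discrete Noether theorem without change of time (T = ℤ). -/
theorem discrete_noether_no_time_change
    {d : ℕ} (L : ℤ → EuclideanSpace ℝ (Fin d) → EuclideanSpace ℝ (Fin d) → ℝ)
    (Lx Lv : ℤ → EuclideanSpace ℝ (Fin d) → EuclideanSpace ℝ (Fin d) →
      EuclideanSpace ℝ (Fin d))
    (hLx : ∀ n x v, HasGradientAt (fun y => L n y v) (Lx n x v) x)
    (hLv : ∀ n x v, HasGradientAt (fun w => L n x w) (Lv n x v) v)
    (ξ : EuclideanSpace ℝ (Fin d) → EuclideanSpace ℝ (Fin d))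
    (x : ℤ → EuclideanSpace ℝ (Fin d))
    (hEL : ∀ n : ℤ,
      Lv n (x n) (x (n + 1) - x n) - Lv (n - 1) (x (n - 1)) (x n - x (n - 1))
        = Lx n (x n) (x (n + 1) - x n))
    (hinv : ∀ n : ℤ,
      (inner ℝ (Lx n (x n) (x (n + 1) - x n)) (ξ (x n)) : ℝ)
        + (inner ℝ (Lv n (x n) (x (n + 1) - x n)) (ξ (x (n + 1)) - ξ (x n)) : ℝ) = 0) :
    ∀ m n : ℤ,
      (inner ℝ (ξ (x (m + 1))) (Lv m (x m) (x (m + 1) - x m)) : ℝ)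
        = (inner ℝ (ξ (x (n + 1))) (Lv n (x n) (x (n + 1) - x n)) : ℝ) := by

  set I : ℤ → ℝ := fun n => (inner ℝ (ξ (x (n + 1))) (Lv n (x n) (x (n + 1) - x n)) : ℝ) with hI
  have key : ∀ n : ℤ, I n = I (n - 1) := by
    intro n
    have h1 := hEL n
    have h2 := hinv n
    simp only [hI]
    have : x (n - 1 + 1) = x n := by ring_nf
    rw [this]
    have expand : (inner ℝ (ξ (x (n + 1))) (Lv n (x n) (x (n + 1) - x n)) : ℝ)
        - (inner ℝ (ξ (x n)) (Lv (n - 1) (x (n - 1)) (x n - x (n - 1))) : ℝ)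
        = (inner ℝ (Lv n (x n) (x (n + 1) - x n)) (ξ (x (n + 1)) - ξ (x n)) : ℝ)
          + (inner ℝ (ξ (x n)) (Lv n (x n) (x (n + 1) - x n)
              - Lv (n - 1) (x (n - 1)) (x n - x (n - 1))) : ℝ) := by
      rw [inner_sub_right, inner_sub_right]
      rw [real_inner_comm (ξ (x n)) (Lv n (x n) (x (n + 1) - x n)),
          real_inner_comm (ξ (x (n + 1)))]
      ring
    rw [h1] at expand
    have h3 : (inner ℝ (ξ (x n)) (Lx n (x n) (x (n + 1) - x n)) : ℝ)
        = (inner ℝ (Lx n (x n) (x (n + 1) - x n)) (ξ (x n)) : ℝ) := real_inner_comm _ _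
    rw [h3] at expand
    linarith
  have key' : ∀ n : ℤ, I (n + 1) = I n := by
    intro n
    have := key (n + 1)
    simpa using this
  have toZero : ∀ n : ℤ, I n = I 0 := by
    intro n
    induction n using Int.induction_on with
    | zero => rfl
    | succ k ih => rw [key' k, ih]
    | pred k ih =>
      rw [← key (-(k : ℤ))]
      exact ih
  intro m n
  show I m = I n
  rw [toZero m, toZero n]
end

section
/- Discrete second Euler–Lagrange / Noether identity (T = ℤ with time transformations): Let L : ℤ × ℝ^d × ℝ^d → ℝ, Δx(n) = x(n+1) − x(n), and let x satisfy the discrete Euler–Lagrange equation ∇[∂L/∂v(n,x(n),Δx(n))] = ∂L/∂x(n,x(n),Δx(n)), where ∇f(n) = f(n) − f(n−1). Suppose the infinitesimal invariance identity ∂L/∂t·ζ(n) + ⟨∂L/∂x, ξ(x(n))⟩ + ⟨∂L/∂v, Δ[ξ∘x](n)⟩ + (L − ⟨∂L/∂v, Δx(n)⟩)·Δζ(n) = 0 holds (all evaluated at (n, x(n), Δx(n))). Then the function I(n) = ζ(n+1)·(L − ⟨∂L/∂v, Δx(n)⟩) + ⟨ξ(x(n+1)), ∂L/∂v⟩ +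 Σ_{k=a+1}^{n} ζ(k)·[ ∂L/∂t(k,x(k),Δx(k)) − ∇(L − ⟨∂L/∂v, Δx⟩)(k) ] satisfies ∇I(n) = 0 for all n > a, i.e. I is constant. -/
/-- Discrete second Euler–Lagrange / Noether identity (T = ℤ with time transformations). -/
theorem discrete_noether_with_time_change
    {d : ℕ} (L Lt : ℤ → EuclideanSpace ℝ (Fin d) → EuclideanSpace ℝ (Fin d) → ℝ)
    (Lx Lv : ℤ → EuclideanSpace ℝ (Fin d) → EuclideanSpace ℝ (Fin d) →
      EuclideanSpace ℝ (Fin d))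
    (ζ : ℤ → ℝ) (ξ : EuclideanSpace ℝ (Fin d) → EuclideanSpace ℝ (Fin d))
    (x : ℤ → EuclideanSpace ℝ (Fin d)) (a : ℤ)
    (hEL : ∀ n : ℤ,
      Lv n (x n) (x (n + 1) - x n) - Lv (n - 1) (x (n - 1)) (x n - x (n - 1))
        = Lx n (x n) (x (n + 1) - x n))
    (hinv : ∀ n : ℤ,
      Lt n (x n) (x (n + 1) - x n) * ζ n
        + (inner ℝ (Lx n (x n) (x (n + 1) - x n)) (ξ (x n)) : ℝ)
        + (inner ℝ (Lv n (x n) (x (n + 1) - x n)) (ξ (x (n + 1)) - ξ (x n)) : ℝ)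
        + (L n (x n) (x (n + 1) - x n)
            - (inner ℝ (Lv n (x n) (x (n + 1) - x n)) (x (n + 1) - x n) : ℝ))
          * (ζ (n + 1) - ζ n) = 0)
    (I : ℤ → ℝ)
    (hI : ∀ n : ℤ, I n =
      ζ (n + 1) * (L n (x n) (x (n + 1) - x n)
          - (inner ℝ (Lv n (x n) (x (n + 1) - x n)) (x (n + 1) - x n) : ℝ))
        + (inner ℝ (ξ (x (n + 1))) (Lv n (x n) (x (n + 1) - x n)) : ℝ)
        + ∑ k ∈ Finset.Icc (a + 1) n, ζ k *
            (Lt k (x k) (x (k + 1) - x k)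
              - ((L k (x k) (x (k + 1) - x k)
                    - (inner ℝ (Lv k (x k) (x (k + 1) - x k)) (x (k + 1) - x k) : ℝ))
                 - (L (k - 1) (x (k - 1)) (x k - x (k - 1))
                    - (inner ℝ (Lv (k - 1) (x (k - 1)) (x k - x (k - 1)))
                        (x k - x (k - 1)) : ℝ))))) :
    ∀ n : ℤ, a < n → I n - I (n - 1) = 0 := by
  intro n hn
  obtain ⟨m, rfl⟩ : ∃ m, n = m + 1 := ⟨n - 1, by ring⟩
  have hsum : Finset.Icc (a + 1) (m + 1) = insert (m + 1) (Finset.Icc (a + 1) m) := by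
    ext k; simp only [Finset.mem_Icc, Finset.mem_insert]; omega
  have hEL' := hEL (m + 1)
  have hinv' := hinv (m + 1)
  rw [inner_sub_right] at hinv'
  simp only [add_sub_cancel_right] at hEL' hinv' ⊢
  have h2 : (inner ℝ (Lv (m + 1) (x (m + 1)) (x (m + 1 + 1) - x (m + 1))) (ξ (x (m + 1))) : ℝ)
      - (inner ℝ (Lv m (x m) (x (m + 1) - x m)) (ξ (x (m + 1))) : ℝ)
      = (inner ℝ (Lx (m + 1) (x (m + 1)) (x (m + 1 + 1) - x (m + 1))) (ξ (x (m + 1))) : ℝ) := by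
    rw [← inner_sub_left, hEL']
  rw [hI (m + 1), hI m]
  rw [hsum, Finset.sum_insert (by simp)]
  simp only [add_sub_cancel_right]
  rw [real_inner_comm _ (ξ (x (m + 1 + 1))), real_inner_comm _ (ξ (x (m + 1)))]
  linear_combination hinv' + h2
end
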